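/- Parametrized construction of lunar magic squares: let B ≥ 2, let a, b, c, d, α, β, γ, δ be natural numbers such that a dominates b, c, and d in base B, α dominates β, γ, and δ in base B, and let k be such that α, β, γ, δ < B^k. Then the 3×3 matrix [[a·B^k, b·B^k ⊕ α, a·B^k ⊕ δ], [a·B^k ⊕ γ, 0, c·B^k ⊕ α], [d·B^k ⊕ α, a·B^k ⊕ β, α]] is a base-B lunar magic square with total a·B^k ⊕ α. -/

import Mathlib

/-- The `d`-th base-`B` digit of `n` (position 0 is the least significant digit). -/
def lunarDigit (B n d : ℕ) : ℕ := n / B ^ d % B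

/-- Base-`B` lunar addition: the `d`-th digit of `x ⊕ y` is the maximum of the
`d`-th digits of `x` and `y` (no carries). -/
def lunarAdd (B x y : ℕ) : ℕ :=
  ∑ d ∈ Finset.range (x + y + 1), max (lunarDigit B x d) (lunarDigit B y d) * B ^ d

/-- Base-`B` lunar multiplication: the `d`-th digit of `x ⊗ y` is the maximum over
`j + k = d` of the minimum of the `j`-th digit of `x` and the `k`-th digit of `y`. -/
def lunarMul (B x y : ℕ) : ℕ :=
  ∑ d ∈ Finset.range (x + y + 1),
    ((Finset.range (d + 1)).sup fun j => min (lunarDigit B x j) (lunarDigit B y (d - j))) * B ^ d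

/-- `M` is a 3×3 base-`B` lunar magic square with total `T`: the lunar sums of the
three rows, the three columns, and the two diagonals all equal `T`. -/
def IsLunarMagic (B : ℕ) (M : Fin 3 → Fin 3 → ℕ) (T : ℕ) : Prop :=
  (∀ i, lunarAdd B (lunarAdd B (M i 0) (M i 1)) (M i 2) = T) ∧
  (∀ j, lunarAdd B (lunarAdd B (M 0 j) (M 1 j)) (M 2 j) = T) ∧
  lunarAdd B (lunarAdd B (M 0 0) (M 1 1)) (M 2 2) = T ∧
  lunarAdd B (lunarAdd B (M 0 2) (M 1 1)) (M 2 0) = T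

/-- The nine entries of `M` are pairwise distinct. -/
def DistinctEntries (M : Fin 3 → Fin 3 → ℕ) : Prop :=
  ∀ i j i' j', M i j = M i' j' → i = i' ∧ j = j'

/-- `x` dominates `y` in base `B`: every base-`B` digit of `x` is at least the
corresponding digit of `y`; equivalently `x ⊕ y = x`. -/
def Dominates (B x y : ℕ) : Prop := lunarAdd B x y = x

lemma digit_lt {B : ℕ} (hB : 2 ≤ B) (n d : ℕ) : lunarDigit B n d < B :=
  Nat.mod_lt _ (by omega)

lemma digit_eq_zero {B n d : ℕ} (h : n < B ^ d) : lunarDigit B n d = 0 := by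
  simp [lunarDigit, Nat.div_eq_of_lt h]

lemma self_lt_pow {B : ℕ} (hB : 2 ≤ B) (n : ℕ) : n < B ^ n :=
  Nat.lt_pow_self (n := n) (by omega)

lemma sum_lt {B : ℕ} {c : ℕ → ℕ} (hc : ∀ d, c d < B) (N : ℕ) :
    ∑ d ∈ Finset.range N, c d * B ^ d < B ^ N := by
  induction N with
  | zero => simp
  | succ N ih =>
    rw [Finset.sum_range_succ, pow_succ]
    have hB : 0 < B := (Nat.zero_le _).trans_lt (hc 0)
    have h1 : c N * B ^ N ≤ (B - 1) * B ^ N :=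
      Nat.mul_le_mul_right _ (by have := hc N; omega)
    have h3 : (B - 1) * B ^ N = B * B ^ N - B ^ N := by rw [Nat.sub_mul, one_mul]
    have h4 : B ^ N ≤ B * B ^ N := Nat.le_mul_of_pos_left _ (by omega)
    have h5 : B * B ^ N = B ^ N * B := mul_comm _ _
    omega

lemma digit_sum {B : ℕ} (hB : 2 ≤ B) {c : ℕ → ℕ} (hc : ∀ d, c d < B) (N j : ℕ) :
    lunarDigit B (∑ d ∈ Finset.range N, c d * B ^ d) j = if j < N then c j else 0 := by
  induction N with
  | zero => simp [lunarDigit]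
  | succ N ih =>
    rw [Finset.sum_range_succ]
    have hSlt : ∑ d ∈ Finset.range N, c d * B ^ d < B ^ N := sum_lt hc N
    rcases lt_trichotomy j N with h | h | h
    · have epow : B ^ N = B ^ (N - j - 1) * B * B ^ j := by
        rw [← pow_succ, ← pow_add]; congr 1; omega
      have e1 : c N * B ^ N = c N * B ^ (N - j - 1) * B * B ^ j := by rw [epow]; ring
      unfold lunarDigit
      rw [e1, Nat.add_mul_div_right _ _ (pow_pos (by omega : 0 < B) j),
        Nat.add_mul_mod_self_right, if_pos (by omega)]
      have := ih
      rw [if_pos h] at this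
      simpa [lunarDigit] using this
    · subst h
      unfold lunarDigit
      rw [Nat.add_mul_div_right _ _ (pow_pos (by omega : 0 < B) j),
        Nat.div_eq_of_lt hSlt, zero_add, Nat.mod_eq_of_lt (hc j), if_pos (Nat.lt_succ_self j)]
    · have hbig : ∑ d ∈ Finset.range N, c d * B ^ d + c N * B ^ N < B ^ j := by
        have h6 : ∑ d ∈ Finset.range (N + 1), c d * B ^ d < B ^ (N + 1) := sum_lt hc (N + 1)
        rw [Finset.sum_range_succ] at h6
        exact lt_of_lt_of_le h6 (Nat.pow_le_pow_right (by omega) (by omega))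
      rw [digit_eq_zero hbig, if_neg (by omega)]

lemma digit_add {B : ℕ} (hB : 2 ≤ B) (x y j : ℕ) :
    lunarDigit B (lunarAdd B x y) j = max (lunarDigit B x j) (lunarDigit B y j) := by
  unfold lunarAdd
  rw [digit_sum hB (fun d => max_lt (digit_lt hB x d) (digit_lt hB y d)) _ j]
  split
  · rfl
  · next h =>
    have hx : x < B ^ j := lt_of_lt_of_le (self_lt_pow hB x) (Nat.pow_le_pow_right (by omega) (by omega))
    have hy : y < B ^ j := lt_of_lt_of_le (self_lt_pow hB y) (Nat.pow_le_pow_right (by omega) (by omega))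
    rw [digit_eq_zero hx, digit_eq_zero hy]
    simp

lemma digit_ext {B : ℕ} (hB : 2 ≤ B) {x y : ℕ}
    (h : ∀ d, lunarDigit B x d = lunarDigit B y d) : x = y := by
  induction x using Nat.strong_induction_on generalizing y with
  | _ x ih =>
    rcases Nat.eq_zero_or_pos x with hx | hx
    · subst hx
      by_contra hy
      have hy' : 0 < y := Nat.pos_of_ne_zero fun h0 => hy h0.symm
      have hd := (h (Nat.log B y)).symm
      rw [show lunarDigit B 0 (Nat.log B y) = 0 from by simp [lunarDigit]] at hd
      have h1 : B ^ Nat.log B y ≤ y := Nat.pow_log_le_self B (by omega)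
      have h2 : y < B ^ (Nat.log B y + 1) := Nat.lt_pow_succ_log_self (by omega) y
      have h3 : 0 < y / B ^ Nat.log B y := Nat.div_pos h1 (pow_pos (by omega : 0 < B) _)
      have h4 : y / B ^ Nat.log B y < B := by
        rw [Nat.div_lt_iff_lt_mul (pow_pos (by omega : 0 < B) _)]
        rw [pow_succ] at h2
        calc y < B ^ Nat.log B y * B := h2
          _ = B * B ^ Nat.log B y := mul_comm _ _
      have h5 : lunarDigit B y (Nat.log B y) = y / B ^ Nat.log B y := by
        unfold lunarDigit; exact Nat.mod_eq_of_lt h4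
      omega
    · have hxy0 : x % B = y % B := by
        have h0 := h 0
        simpa [lunarDigit] using h0
      have hdiv : x / B = y / B := by
        apply ih (x / B) (Nat.div_lt_self hx (by omega))
        intro e
        have he := h (e + 1)
        unfold lunarDigit at he ⊢
        rw [Nat.div_div_eq_div_mul, Nat.div_div_eq_div_mul, ← pow_succ']
        exact he
      have hx1 := Nat.div_add_mod x B
      have hy1 := Nat.div_add_mod y B
      rw [hdiv, hxy0] at hx1
      omega

lemma dominates_iff {B : ℕ} (hB : 2 ≤ B) {x y : ℕ} :
    Dominates B x y ↔ ∀ d, lunarDigit B y d ≤ lunarDigit B x d := by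
  constructor
  · intro hd d
    have h2 := congrArg (fun n => lunarDigit B n d) hd
    rw [digit_add hB] at h2
    omega
  · intro hd
    apply digit_ext hB
    intro d
    rw [digit_add hB]
    exact max_eq_left (hd d)

lemma digit_mul_pow {B : ℕ} (hB : 2 ≤ B) (x k d : ℕ) :
    lunarDigit B (x * B ^ k) d = if d < k then 0 else lunarDigit B x (d - k) := by
  unfold lunarDigit
  split
  · next h =>
    have epow : B ^ k = B ^ (k - d - 1) * B * B ^ d := by
      rw [← pow_succ, ← pow_add]; congr 1; omega
    have e : x * B ^ k = x * B ^ (k - d - 1) * B * B ^ d := by rw [epow]; ring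
    rw [e, Nat.mul_div_cancel _ (pow_pos (by omega : 0 < B) d), Nat.mul_mod_left]
  · next h =>
    have e : B ^ d = B ^ k * B ^ (d - k) := by
      rw [← pow_add]
      congr 1
      omega
    rw [e, ← Nat.div_div_eq_div_mul, Nat.mul_div_cancel _ (pow_pos (by omega : 0 < B) k)]

theorem stmt_8 (B : ℕ) (hB : 2 ≤ B) (a b c d α β γ δ k : ℕ)
    (hab : Dominates B a b) (hac : Dominates B a c) (had : Dominates B a d)
    (hαβ : Dominates B α β) (hαγ : Dominates B α γ) (hαδ : Dominates B α δ)
    (hα : α < B ^ k) (hβ : β < B ^ k) (hγ : γ < B ^ k) (hδ : δ < B ^ k) :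
    IsLunarMagic B
      ![![a * B ^ k, lunarAdd B (b * B ^ k) α, lunarAdd B (a * B ^ k) δ],
        ![lunarAdd B (a * B ^ k) γ, 0, lunarAdd B (c * B ^ k) α],
        ![lunarAdd B (d * B ^ k) α, lunarAdd B (a * B ^ k) β, α]]
      (lunarAdd B (a * B ^ k) α) := by
  have hab' := (dominates_iff hB).mp hab
  have hac' := (dominates_iff hB).mp hac
  have had' := (dominates_iff hB).mp had
  have hαβ' := (dominates_iff hB).mp hαβ
  have hαγ' := (dominates_iff hB).mp hαγ
  have hαδ' := (dominates_iff hB).mp hαδ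
  have key : ∀ x, x < B ^ k → ∀ n, k ≤ n → lunarDigit B x n = 0 := fun x hx n hn =>
    digit_eq_zero (hx.trans_le (Nat.pow_le_pow_right (by omega) hn))
  refine ⟨fun i => ?_, fun j => ?_, ?_, ?_⟩ <;>
    [fin_cases i; fin_cases j; skip; skip] <;>
    simp only [Matrix.cons_val', Matrix.cons_val_zero, Matrix.cons_val_one, Matrix.head_cons,
      Matrix.empty_val', Matrix.cons_val_fin_one, Matrix.head_fin_const, Matrix.cons_val_two,
      Matrix.tail_cons, Fin.isValue, Fin.zero_eta, Fin.mk_one, Fin.reduceFinMk] <;>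
    · apply digit_ext hB
      intro n
      have h0 : lunarDigit B 0 n = 0 := by simp [lunarDigit]
      simp only [digit_add hB, digit_mul_pow hB, h0]
      have e1 := hab' (n - k); have e2 := hac' (n - k); have e3 := had' (n - k)
      have f1 := hαβ' n; have f2 := hαγ' n; have f3 := hαδ' n
      rcases Nat.lt_or_ge n k with h | h
      · simp only [if_pos h]
        omega
      · simp only [if_neg (Nat.not_lt.mpr h), key α hα n h, key β hβ n h, key γ hγ n h,
          key δ hδ n h]
        omega
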